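/- Let G be a discrete group and 1 < p < ∞. The map κ : ℓ¹(G) → 𝒩^p(G), f ↦ M_{f̌} (where f̌(t) = f(t⁻¹)), is a continuous algebra homomorphism from the convolution algebra ℓ¹(G) into the Neufang convolution algebra 𝒩^p(G) satisfying σ ∘ κ = id_{ℓ¹(G)}; hence the extension 0 → I → 𝒩^p(G) → ℓ¹(G) → 0 splits. -/

import Mathlib

noncomputable section

/- STATEMENT 14: Let G be a discrete group and 1 < p < ∞.  The map
κ : ℓ¹(G) → 𝒩^p(G), f ↦ M_{f̌}, is a continuous algebra homomorphism from the
convolution algebra ℓ¹(G) into the Neufang convolution algebra 𝒩^p(G) with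
σ ∘ κ = id; hence the extension 0 → I → 𝒩^p(G) → ℓ¹(G) → 0 splits.

Here 𝒩^p(G) is represented abstractly as a Banach algebra N together with the
multiplication operators ι s = M_{δ_s} (of nuclear norm 1), satisfying Neufang's
product rule M_{δ_s} * M_{δ_t} = M_{δ_{ts}}, and the homomorphism
σ : 𝒩^p(G) → ℓ¹(G) with σ(M_{δ_s}) = δ_{s⁻¹}. -/
set_option maxHeartbeats 1000000 in
theorem kappa_splits_neufang_extension
    {G : Type} [Group G] [DecidableEq G]
    (p : ENNReal) [Fact (1 ≤ p)] (hp1 : 1 < p) (hp2 : p < ⊤)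
    -- the Neufang algebra 𝒩^p(G), abstractly
    (N : Type) [NonUnitalNormedRing N] [NormedSpace ℂ N]
    [IsScalarTower ℂ N N] [SMulCommClass ℂ N N] [CompleteSpace N]
    -- the operators M_{δ_s} ∈ 𝒩^p(G)
    (ι : G → N) (hιnorm : ∀ s, ‖ι s‖ ≤ 1)
    (hιmul : ∀ s t : G, ι s * ι t = ι (t * s))
    -- the indicators δ_t ∈ ℓ¹(G)
    (δ : G → lp (fun _ : G => ℂ) 1)
    (hδ : ∀ t u : G, (δ t) u = if u = t then 1 else 0)
    -- σ : 𝒩^p(G) → ℓ¹(G), an algebra homomorphism with σ(M_{δ_s}) = δ_{s⁻¹}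
    (σ : N →L[ℂ] lp (fun _ : G => ℂ) 1)
    (hσι : ∀ s : G, σ (ι s) = δ s⁻¹)
    -- the convolution product on ℓ¹(G)
    (conv1 : lp (fun _ : G => ℂ) 1 → lp (fun _ : G => ℂ) 1 → lp (fun _ : G => ℂ) 1)
    (hconv1 : ∀ f g : lp (fun _ : G => ℂ) 1, ∀ t : G,
      (conv1 f g) t = ∑' s : G, f s * g (s⁻¹ * t))
    -- σ is an algebra homomorphism
    (hσmul : ∀ u v : N, σ (u * v) = conv1 (σ u) (σ v)) :
    ∃ κ : lp (fun _ : G => ℂ) 1 →L[ℂ] N,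
      (∀ f g : lp (fun _ : G => ℂ) 1, κ (conv1 f g) = κ f * κ g) ∧
      (∀ f : lp (fun _ : G => ℂ) 1, σ (κ f) = f) ∧
      (∀ s : G, κ (δ s) = ι s⁻¹) := by
  classical
  -- summability of norms in ℓ¹
  have hnorm : ∀ f : lp (fun _ : G => ℂ) 1, HasSum (fun t => ‖f t‖) ‖f‖ := by
    intro f
    have h := lp.hasSum_norm (E := fun _ : G => ℂ) (p := 1) (by norm_num) f
    simpa using h
  -- summability of the defining series of κ
  have hsum : ∀ f : lp (fun _ : G => ℂ) 1, Summable (fun t : G => f t • ι t⁻¹) := by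
    intro f
    refine Summable.of_norm_bounded (g := fun t => ‖f t‖) (hnorm f).summable ?_
    intro t
    rw [norm_smul]
    calc ‖f t‖ * ‖ι t⁻¹‖ ≤ ‖f t‖ * 1 :=
          mul_le_mul_of_nonneg_left (hιnorm _) (norm_nonneg _)
      _ = ‖f t‖ := mul_one _
  -- the linear map κ₀
  let κ₀ : lp (fun _ : G => ℂ) 1 →ₗ[ℂ] N :=
    { toFun := fun f => ∑' t : G, f t • ι t⁻¹
      map_add' := by
        intro f g
        rw [← Summable.tsum_add (hsum f) (hsum g)]
        refine tsum_congr fun t => ?_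
        have : (↑(f + g) : G → ℂ) t = f t + g t := by
          rw [lp.coeFn_add]; rfl
        rw [this, add_smul]
      map_smul' := by
        intro c f
        rw [RingHom.id_apply, ← tsum_const_smul'' c]
        refine tsum_congr fun t => ?_
        have : (↑(c • f) : G → ℂ) t = c * f t := by
          rw [lp.coeFn_smul]; rfl
        rw [this, mul_smul] }
  have hκ₀ : ∀ f, κ₀ f = ∑' t : G, f t • ι t⁻¹ := fun _ => rfl
  have hbound : ∀ f : lp (fun _ : G => ℂ) 1, ‖κ₀ f‖ ≤ 1 * ‖f‖ := by
    intro f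
    rw [one_mul, hκ₀]
    refine tsum_of_norm_bounded (hnorm f) ?_
    intro t
    rw [norm_smul]
    calc ‖f t‖ * ‖ι t⁻¹‖ ≤ ‖f t‖ * 1 :=
          mul_le_mul_of_nonneg_left (hιnorm _) (norm_nonneg _)
      _ = ‖f t‖ := mul_one _
  let κ : lp (fun _ : G => ℂ) 1 →L[ℂ] N := κ₀.mkContinuous 1 hbound
  have hκ : ∀ f, κ f = ∑' t : G, f t • ι t⁻¹ := fun _ => rfl
  have hκsum : ∀ f : lp (fun _ : G => ℂ) 1,
      HasSum (fun t : G => f t • ι t⁻¹) (κ f) := by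
    intro f
    rw [hκ]
    exact (hsum f).hasSum
  -- κ (δ s) = ι s⁻¹
  have hκδ : ∀ s : G, κ (δ s) = ι s⁻¹ := by
    intro s
    rw [hκ]
    rw [tsum_eq_single s]
    · rw [hδ s s, if_pos rfl, one_smul]
    · intro t ht
      rw [hδ s t, if_neg ht, zero_smul]
  -- σ ∘ κ = id
  have hσκ : ∀ f : lp (fun _ : G => ℂ) 1, σ (κ f) = f := by
    intro f
    have h1 : HasSum (fun t : G => σ (f t • ι t⁻¹)) (σ (κ f)) :=
      (hκsum f).mapL σ
    have h2 : ∀ t : G, σ (f t • ι t⁻¹) = lp.single 1 t (f t) := by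
      intro t
      rw [map_smul, hσι, inv_inv]
      refine lp.ext (funext fun u => ?_)
      have hc : (↑((f t : ℂ) • δ t) : G → ℂ) u = f t * (δ t) u := by
        rw [lp.coeFn_smul]; rfl
      rw [hc, hδ, lp.single_apply]
      by_cases hu : u = t
      · subst hu; simp
      · simp [hu]
    have h4 := lp.hasSum_single (E := fun _ : G => ℂ) (p := 1) (by norm_num) f
    have h5 : HasSum (fun t : G => lp.single 1 t (f t)) (σ (κ f)) := by
      refine HasSum.congr_fun h1 fun t => (h2 t).symm
    exact h5.unique h4
  -- multiplicativity
  have hmul : ∀ f g : lp (fun _ : G => ℂ) 1, κ (conv1 f g) = κ f * κ g := by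
    intro f g
    -- summability of the product of norms
    have hng : Summable (fun st : G × G => ‖f st.1‖ * ‖g st.2‖) :=
      Summable.mul_of_nonneg (hnorm f).summable (hnorm g).summable
        (fun _ => norm_nonneg _) (fun _ => norm_nonneg _)
    have hprod : Summable (fun st : G × G => (f st.1 • ι st.1⁻¹) * (g st.2 • ι st.2⁻¹)) := by
      refine Summable.of_norm_bounded hng ?_
      intro st
      calc ‖(f st.1 • ι st.1⁻¹) * (g st.2 • ι st.2⁻¹)‖
          ≤ ‖f st.1 • ι st.1⁻¹‖ * ‖g st.2 • ι st.2⁻¹‖ := norm_mul_le _ _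
        _ ≤ (‖f st.1‖ * 1) * (‖g st.2‖ * 1) := by
            rw [norm_smul, norm_smul]
            exact mul_le_mul (mul_le_mul_of_nonneg_left (hιnorm _) (norm_nonneg _))
              (mul_le_mul_of_nonneg_left (hιnorm _) (norm_nonneg _))
              (mul_nonneg (norm_nonneg _) (norm_nonneg _))
              (mul_nonneg (norm_nonneg _) zero_le_one)
        _ = ‖f st.1‖ * ‖g st.2‖ := by ring
    have h1 : HasSum (fun st : G × G => (f st.1 • ι st.1⁻¹) * (g st.2 • ι st.2⁻¹))
        (κ f * κ g) := (hκsum f).mul (hκsum g) hprod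
    have hterm : ∀ st : G × G, (f st.1 • ι st.1⁻¹) * (g st.2 • ι st.2⁻¹)
        = (f st.1 * g st.2) • ι (st.1 * st.2)⁻¹ := by
      intro st
      rw [smul_mul_smul_comm, hιmul, mul_inv_rev]
    have h2 : HasSum (fun st : G × G => (f st.1 * g st.2) • ι (st.1 * st.2)⁻¹)
        (κ f * κ g) := h1.congr_fun fun st => (hterm st).symm
    -- reindex: (u, s) ↦ (s, s⁻¹ * u)
    let e : G × G ≃ G × G :=
      { toFun := fun us => (us.2, us.2⁻¹ * us.1)
        invFun := fun st => (st.1 * st.2, st.1)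
        left_inv := by intro us; simp
        right_inv := by intro st; simp }
    have h3 : HasSum (fun us : G × G => (f us.2 * g (us.2⁻¹ * us.1)) • ι us.1⁻¹)
        (κ f * κ g) := by
      have := (Equiv.hasSum_iff e).2 h2
      refine this.congr_fun fun us => ?_
      show (f us.2 * g (us.2⁻¹ * us.1)) • ι us.1⁻¹
        = (f (e us).1 * g (e us).2) • ι ((e us).1 * (e us).2)⁻¹
      simp [e]
    -- fiberwise sums over u
    have hfiber : ∀ u : G,
        HasSum (fun s : G => (f s * g (s⁻¹ * u)) • ι u⁻¹) (((conv1 f g) u) • ι u⁻¹) := by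
      intro u
      have hs : Summable (fun s : G => f s * g (s⁻¹ * u)) := by
        refine Summable.of_norm_bounded (g := fun s => ‖f s‖ * ‖g‖) ((hnorm f).summable.mul_right _) ?_
        intro s
        rw [norm_mul]
        exact mul_le_mul_of_nonneg_left (lp.norm_apply_le_norm one_ne_zero g _) (norm_nonneg _)
      have := hs.hasSum.smul_const (ι u⁻¹)
      rwa [← hconv1 f g u] at this
    have h4 : HasSum (fun u : G => ((conv1 f g) u) • ι u⁻¹) (κ f * κ g) :=
      HasSum.prod_fiberwise h3 hfiber
    exact (hκsum (conv1 f g)).unique h4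
  exact ⟨κ, hmul, hσκ, hκδ⟩
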